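/- arXiv:2103.01687 — 2 statements merged into one kernel-verified Lean document; each statement's English description precedes it below -/
import Mathlib

section
/- Let V be a 2g-dimensional vector space over 𝔽₂ equipped with a nondegenerate alternating bilinear form B. The number of quadratic refinements q : V → 𝔽₂ of B (i.e. functions with q(x+y) = q(x) + q(y) + B(x,y)) whose Arf invariant is 0 (even theta-characteristics) equals 2^{g-1}(2^g + 1), and the number with Arf invariant 1 (odd theta-characteristics) equals 2^{g-1}(2^g - 1). -/
/-- The standard nondegenerate alternating bilinear form on `𝔽₂^{2g}`. -/
def stdSymplecticForm (g : ℕ) (x y : Fin (2 * g) → ZMod 2) : ZMod 2 :=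
  ∑ i : Fin g,
    (x ⟨2 * i.val, by have := i.isLt; omega⟩ * y ⟨2 * i.val + 1, by have := i.isLt; omega⟩ +
      x ⟨2 * i.val + 1, by have := i.isLt; omega⟩ * y ⟨2 * i.val, by have := i.isLt; omega⟩)

/-- A quadratic refinement of the standard symplectic form. -/
def IsQuadRefinement (g : ℕ) (q : (Fin (2 * g) → ZMod 2) → ZMod 2) : Prop :=
  ∀ x y, q (x + y) = q x + q y + stdSymplecticForm g x y

/-- The Arf invariant of a quadratic refinement: it is `0` exactly when `q` takes the
value `0` the majority number `2^{2g-1} + 2^{g-1}` of times. -/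
noncomputable def arf (g : ℕ) (q : (Fin (2 * g) → ZMod 2) → ZMod 2) : ZMod 2 :=
  if Nat.card {x : Fin (2 * g) → ZMod 2 // q x = 0} = 2 ^ (2 * g - 1) + 2 ^ (g - 1) then 0 else 1

namespace ThetaAux

def q0 (g : ℕ) (x : Fin (2 * g) → ZMod 2) : ZMod 2 :=
  ∑ i : Fin g, x ⟨2 * i.val, by have := i.isLt; omega⟩ * x ⟨2 * i.val + 1, by have := i.isLt; omega⟩
lemma q0_refinement (g : ℕ) : IsQuadRefinement g (q0 g) := by
  intro x y
  simp only [q0, stdSymplecticForm, Pi.add_apply]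
  rw [← Finset.sum_add_distrib, ← Finset.sum_add_distrib]
  exact Finset.sum_congr rfl fun i _ => by ring
lemma zmod2_cases : ∀ a : ZMod 2, a = 0 ∨ a = 1 := by decide
lemma additive_eq_sum {n : ℕ} (l : (Fin n → ZMod 2) → ZMod 2)
    (hl : ∀ x y, l (x + y) = l x + l y) (x : Fin n → ZMod 2) :
    l x = ∑ j : Fin n, x j * l (Pi.single j 1) := by
  have h0 : l 0 = 0 := by have := hl 0 0; simp at this; linear_combination this
  have hsum : ∀ (s : Finset (Fin n)) (f : Fin n → (Fin n → ZMod 2)),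
      l (∑ j ∈ s, f j) = ∑ j ∈ s, l (f j) := by
    intro s
    induction s using Finset.cons_induction with
    | empty => simp [h0]
    | cons a s ha ih => intro f; rw [Finset.sum_cons, hl, ih, Finset.sum_cons]
  have hx : x = ∑ j : Fin n, Pi.single j (x j) := (Finset.univ_sum_single x).symm
  rw [hx, hsum]
  exact Finset.sum_congr rfl fun j _ => by
    rcases zmod2_cases (x j) with h | h <;> simp [h, h0]
def pairEquiv (g : ℕ) : Fin g × Fin 2 ≃ Fin (2 * g) where
  toFun p := ⟨2 * p.1.val + p.2.val, by have := p.1.isLt; have := p.2.isLt; omega⟩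
  invFun k := (⟨k.val / 2, by have := k.isLt; omega⟩, ⟨k.val % 2, by omega⟩)
  left_inv p := by
    rcases p with ⟨⟨i, hi⟩, ⟨j, hj⟩⟩
    ext <;> simp <;> omega
  right_inv k := by
    rcases k with ⟨k, hk⟩
    ext
    simp
    omega
lemma sum_pairs {M : Type*} [AddCommMonoid M] (g : ℕ) (f : Fin (2 * g) → M) :
    ∑ j : Fin (2 * g), f j =
      ∑ i : Fin g, (f ⟨2 * i.val, by have := i.isLt; omega⟩ +
        f ⟨2 * i.val + 1, by have := i.isLt; omega⟩) := by
  rw [← Equiv.sum_comp (pairEquiv g) f, Fintype.sum_prod_type]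
  refine Finset.sum_congr rfl fun i _ => ?_
  rw [Fin.sum_univ_two]
  rfl
def swapIdx (g : ℕ) (k : Fin (2 * g)) : Fin (2 * g) :=
  ⟨if k.val % 2 = 0 then k.val + 1 else k.val - 1, by have := k.isLt; split <;> omega⟩
lemma swapIdx_even (g : ℕ) (i : Fin g) :
    swapIdx g ⟨2 * i.val, by have := i.isLt; omega⟩ = ⟨2 * i.val + 1, by have := i.isLt; omega⟩ := by
  simp [swapIdx, Nat.mul_mod_right]
lemma swapIdx_odd (g : ℕ) (i : Fin g) :
    swapIdx g ⟨2 * i.val + 1, by have := i.isLt; omega⟩ = ⟨2 * i.val, by have := i.isLt; omega⟩ := by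
  simp [swapIdx]
lemma swapIdx_invol (g : ℕ) (k : Fin (2 * g)) : swapIdx g (swapIdx g k) = k := by
  ext
  simp only [swapIdx]
  split <;> split <;> omega

/-- the refinement attached to a linear functional `c` -/
def qc (g : ℕ) (c : Fin (2 * g) → ZMod 2) (x : Fin (2 * g) → ZMod 2) : ZMod 2 :=
  q0 g x + ∑ j : Fin (2 * g), c j * x j

lemma dot_eq_form (g : ℕ) (c x : Fin (2 * g) → ZMod 2) :
    ∑ j : Fin (2 * g), c j * x j = stdSymplecticForm g x (c ∘ swapIdx g) := by
  rw [sum_pairs, stdSymplecticForm]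
  refine Finset.sum_congr rfl fun i _ => ?_
  simp only [Function.comp_apply, swapIdx_even, swapIdx_odd]
  ring

lemma qc_refinement (g : ℕ) (c : Fin (2 * g) → ZMod 2) : IsQuadRefinement g (qc g c) := by
  intro x y
  simp only [qc, q0_refinement g x y, Pi.add_apply, mul_add]
  rw [Finset.sum_add_distrib]
  ring

lemma sum_mul_single (g : ℕ) (c : Fin (2 * g) → ZMod 2) (j : Fin (2 * g)) :
    ∑ j' : Fin (2 * g), c j' * (Pi.single j 1 : Fin (2 * g) → ZMod 2) j' = c j := by
  rw [Finset.sum_eq_single j]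
  · simp
  · intro b _ hb; rw [Pi.single_eq_of_ne hb]; ring
  · simp

lemma refinement_eq_qc {g : ℕ} {q : (Fin (2 * g) → ZMod 2) → ZMod 2}
    (hq : IsQuadRefinement g q) :
    q = qc g (fun j => q (Pi.single j 1) + q0 g (Pi.single j 1)) := by
  have hladd : ∀ x y, (q x + q0 g x) + (q y + q0 g y) = q (x + y) + q0 g (x + y) := by
    intro x y
    have h2 : (2 : ZMod 2) = 0 := rfl
    rw [hq x y, q0_refinement g x y]
    linear_combination -stdSymplecticForm g x y * h2
  funext x
  have := additive_eq_sum (fun z => q z + q0 g z) (fun x y => (hladd x y).symm) x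
  have h2 : (2 : ZMod 2) = 0 := rfl
  have hcomm : ∑ j : Fin (2 * g), x j * (q (Pi.single j 1) + q0 g (Pi.single j 1)) =
      ∑ j : Fin (2 * g), (q (Pi.single j 1) + q0 g (Pi.single j 1)) * x j :=
    Finset.sum_congr rfl fun j _ => mul_comm _ _
  simp only [qc]
  linear_combination this + hcomm - q0 g x * h2

lemma qc_inj {g : ℕ} {c c' : Fin (2 * g) → ZMod 2} (h : qc g c = qc g c') : c = c' := by
  funext j
  have := congrFun h (Pi.single j 1)
  simp only [qc, sum_mul_single] at this
  linear_combination this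



/-- subtype of a product as a sigma type -/
def prodSubtypeSigma {α β : Type*} (P : α × β → Prop) :
    {p : α × β // P p} ≃ Σ a : α, {b : β // P (a, b)} where
  toFun p := ⟨p.1.1, p.1.2, by rw [Prod.mk.eta]; exact p.2⟩
  invFun s := ⟨(s.1, s.2.1), s.2.2⟩
  left_inv p := by rfl
  right_inv s := by rfl

abbrev S (g : ℕ) (h : Fin g → ZMod 2 × ZMod 2) : ZMod 2 := ∑ i : Fin g, (h i).1 * (h i).2

lemma card_step (g : ℕ) (v : ZMod 2) :
    Fintype.card {h : Fin (g + 1) → ZMod 2 × ZMod 2 // S (g + 1) h = v} =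
      3 * Fintype.card {h : Fin g → ZMod 2 × ZMod 2 // S g h = v} +
        Fintype.card {h : Fin g → ZMod 2 × ZMod 2 // S g h = v + 1} := by
  have e1 : {h : Fin (g + 1) → ZMod 2 × ZMod 2 // S (g + 1) h = v} ≃
      {p : (ZMod 2 × ZMod 2) × (Fin g → ZMod 2 × ZMod 2) //
        p.1.1 * p.1.2 + S g p.2 = v} := by
    refine (Fin.consEquiv (fun _ : Fin (g + 1) => ZMod 2 × ZMod 2)).symm.subtypeEquiv fun h => ?_
    rw [S, Fin.sum_univ_succ]
    rfl
  rw [Fintype.card_congr (e1.trans (prodSubtypeSigma _)), Fintype.card_sigma,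
    Fintype.sum_prod_type]
  have zmodsum : ∀ (F : ZMod 2 → ℕ), ∑ a : ZMod 2, F a = F 0 + F 1 := fun F => Fin.sum_univ_two F
  rw [zmodsum]
  rw [zmodsum, zmodsum]
  have h00 : ∀ f : Fin g → ZMod 2 × ZMod 2, ((0 : ZMod 2) * (0 : ZMod 2) + S g f = v) ↔ S g f = v := by
    intro f; rw [zero_mul, zero_add]
  have h01 : ∀ f : Fin g → ZMod 2 × ZMod 2, ((0 : ZMod 2) * (1 : ZMod 2) + S g f = v) ↔ S g f = v := by
    intro f; rw [zero_mul, zero_add]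
  have h10 : ∀ f : Fin g → ZMod 2 × ZMod 2, ((1 : ZMod 2) * (0 : ZMod 2) + S g f = v) ↔ S g f = v := by
    intro f; rw [mul_zero, zero_add]
  have h11 : ∀ f : Fin g → ZMod 2 × ZMod 2, ((1 : ZMod 2) * (1 : ZMod 2) + S g f = v) ↔ S g f = v + 1 := by
    intro f
    have h2 : (2 : ZMod 2) = 0 := rfl
    constructor
    · intro h; linear_combination h - h2
    · intro h; linear_combination h + h2
  rw [Fintype.card_congr (Equiv.subtypeEquivRight (h00 ·)),
    Fintype.card_congr (Equiv.subtypeEquivRight (h01 ·)),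
    Fintype.card_congr (Equiv.subtypeEquivRight (h10 ·)),
    Fintype.card_congr (Equiv.subtypeEquivRight (h11 ·))]
  ring

lemma card_add (g : ℕ) :
    Fintype.card {h : Fin g → ZMod 2 × ZMod 2 // S g h = 0} +
      Fintype.card {h : Fin g → ZMod 2 × ZMod 2 // S g h = 1} = 4 ^ g := by
  induction g with
  | zero => simp [S]
  | succ g ih =>
      rw [card_step, card_step]
      simp only [zero_add, show (1 : ZMod 2) + 1 = 0 from rfl]
      have h4 : (4 : ℕ) ^ (g + 1) = 4 * 4 ^ g := by ring
      omega

lemma card_sub (g : ℕ) :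
    Fintype.card {h : Fin g → ZMod 2 × ZMod 2 // S g h = 0} =
      Fintype.card {h : Fin g → ZMod 2 × ZMod 2 // S g h = 1} + 2 ^ g := by
  induction g with
  | zero => simp [S]
  | succ g ih =>
      rw [card_step, card_step]
      simp only [zero_add, show (1 : ZMod 2) + 1 = 0 from rfl]
      have h4 : (2 : ℕ) ^ (g + 1) = 2 * 2 ^ g := by ring
      omega

lemma card_zero_pairs (g : ℕ) (hg : 1 ≤ g) :
    Fintype.card {h : Fin g → ZMod 2 × ZMod 2 // S g h = 0} =
      2 ^ (2 * g - 1) + 2 ^ (g - 1) := by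
  have h1 := card_add g
  have h2 := card_sub g
  have h4 : (4 : ℕ) ^ g = 2 ^ (2 * g) := by
    rw [show (4 : ℕ) = 2 ^ 2 from rfl, ← pow_mul]
  have e1 : 2 ^ (2 * g) = 2 * 2 ^ (2 * g - 1) := by
    rw [← pow_succ']
    congr 1
    omega
  have e2 : 2 ^ g = 2 * 2 ^ (g - 1) := by
    rw [← pow_succ']
    congr 1
    omega
  omega

lemma card_one_pairs (g : ℕ) (hg : 1 ≤ g) :
    Fintype.card {h : Fin g → ZMod 2 × ZMod 2 // S g h = 1} =
      2 ^ (2 * g - 1) - 2 ^ (g - 1) := by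
  have h2 := card_sub g
  have := card_zero_pairs g hg
  have e2 : 2 ^ g = 2 * 2 ^ (g - 1) := by
    rw [← pow_succ']
    congr 1
    omega
  omega


/-- packing a vector into pairs -/
def pack (g : ℕ) (x : Fin (2 * g) → ZMod 2) (i : Fin g) : ZMod 2 × ZMod 2 :=
  (x ⟨2 * i.val, by have := i.isLt; omega⟩, x ⟨2 * i.val + 1, by have := i.isLt; omega⟩)

def unpack (g : ℕ) (h : Fin g → ZMod 2 × ZMod 2) (k : Fin (2 * g)) : ZMod 2 :=
  if k.val % 2 = 0 then (h ⟨k.val / 2, by have := k.isLt; omega⟩).1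
  else (h ⟨k.val / 2, by have := k.isLt; omega⟩).2

lemma fin_app_congr {n : ℕ} (x : Fin n → ZMod 2) {a b : Fin n} (h : a.val = b.val) :
    x a = x b := congrArg x (Fin.ext h)

lemma unpack_pack (g : ℕ) (x : Fin (2 * g) → ZMod 2) : unpack g (pack g x) = x := by
  funext k
  rcases k with ⟨k, hk⟩
  unfold unpack pack
  by_cases h : k % 2 = 0
  · rw [if_pos h]
    exact fin_app_congr x (by simp; omega)
  · rw [if_neg h]
    exact fin_app_congr x (by simp; omega)

lemma pack_unpack (g : ℕ) (h : Fin g → ZMod 2 × ZMod 2) : pack g (unpack g h) = h := by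
  funext i
  rcases i with ⟨i, hi⟩
  unfold pack unpack
  have h1 : (2 * i) % 2 = 0 := by omega
  have h2 : ¬ ((2 * i + 1) % 2 = 0) := by omega
  rw [if_pos h1, if_neg h2]
  have e1 : (2 * i) / 2 = i := by omega
  have e2 : (2 * i + 1) / 2 = i := by omega
  apply Prod.ext <;> simp only [e1, e2]

def vecPairEquiv (g : ℕ) : (Fin (2 * g) → ZMod 2) ≃ (Fin g → ZMod 2 × ZMod 2) :=
  ⟨pack g, unpack g, unpack_pack g, pack_unpack g⟩

lemma q0_eq_S (g : ℕ) (x : Fin (2 * g) → ZMod 2) : q0 g x = S g (pack g x) := rfl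

lemma card_q0 (g : ℕ) (v : ZMod 2) :
    Nat.card {x : Fin (2 * g) → ZMod 2 // q0 g x = v} =
      Fintype.card {h : Fin g → ZMod 2 × ZMod 2 // S g h = v} := by
  rw [Nat.card_eq_fintype_card]
  exact Fintype.card_congr ((vecPairEquiv g).subtypeEquiv fun x => by rw [q0_eq_S]; rfl)

lemma qc_translate (g : ℕ) (c x : Fin (2 * g) → ZMod 2) :
    qc g c x = q0 g (x + c ∘ swapIdx g) + q0 g (c ∘ swapIdx g) := by
  have h2 : (2 : ZMod 2) = 0 := rfl
  have hr := q0_refinement g x (c ∘ swapIdx g)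
  have hd := dot_eq_form g c x
  simp only [qc]
  linear_combination -hr + hd - (q0 g (c ∘ swapIdx g)) * h2

lemma card_zeros_qc (g : ℕ) (c : Fin (2 * g) → ZMod 2) :
    Nat.card {x : Fin (2 * g) → ZMod 2 // qc g c x = 0} =
      Nat.card {y : Fin (2 * g) → ZMod 2 // q0 g y = q0 g (c ∘ swapIdx g)} := by
  apply Nat.card_congr
  refine (Equiv.addRight (c ∘ swapIdx g)).subtypeEquiv fun x => ?_
  rw [qc_translate g c x]
  show q0 g (x + c ∘ swapIdx g) + q0 g (c ∘ swapIdx g) = 0 ↔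
    q0 g (x + c ∘ swapIdx g) = q0 g (c ∘ swapIdx g)
  have h2 : (2 : ZMod 2) = 0 := rfl
  constructor
  · intro h
    linear_combination h - (q0 g (c ∘ swapIdx g)) * h2
  · intro h
    linear_combination h + (q0 g (c ∘ swapIdx g)) * h2

lemma arf_qc (g : ℕ) (hg : 1 ≤ g) (c : Fin (2 * g) → ZMod 2) :
    arf g (qc g c) = q0 g (c ∘ swapIdx g) := by
  have hZ := card_zero_pairs g hg
  have hO := card_one_pairs g hg
  have hpos : 1 ≤ (2 : ℕ) ^ (g - 1) := Nat.one_le_two_pow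
  have hle : (2 : ℕ) ^ (g - 1) ≤ 2 ^ (2 * g - 1) := Nat.pow_le_pow_right (by norm_num) (by omega)
  rcases zmod2_cases (q0 g (c ∘ swapIdx g)) with h | h <;> rw [h]
  · rw [arf, if_pos]
    rw [card_zeros_qc, h, card_q0, hZ]
  · rw [arf, if_neg]
    rw [card_zeros_qc, h, card_q0, hO]
    omega

/-- main counting lemma, for each value of the Arf invariant -/
lemma count_arf (g : ℕ) (hg : 1 ≤ g) (v : ZMod 2) :
    Nat.card {q : (Fin (2 * g) → ZMod 2) → ZMod 2 //
        IsQuadRefinement g q ∧ arf g q = v} =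
      Fintype.card {h : Fin g → ZMod 2 × ZMod 2 // S g h = v} := by
  have step1 : Nat.card {c : Fin (2 * g) → ZMod 2 // q0 g (c ∘ swapIdx g) = v} =
      Nat.card {q : (Fin (2 * g) → ZMod 2) → ZMod 2 //
        IsQuadRefinement g q ∧ arf g q = v} := by
    apply Nat.card_eq_of_bijective
      (fun c => ⟨qc g c.1, qc_refinement g c.1, by rw [arf_qc g hg]; exact c.2⟩)
    constructor
    · intro c c' h
      ext1
      exact qc_inj (congrArg Subtype.val h)
    · rintro ⟨q, hq, ha⟩
      refine ⟨⟨fun j => q (Pi.single j 1) + q0 g (Pi.single j 1), ?_⟩, ?_⟩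
      · rw [← arf_qc g hg, ← refinement_eq_qc hq]
        exact ha
      · ext1
        exact (refinement_eq_qc hq).symm
  rw [← step1]
  have step2 : Nat.card {c : Fin (2 * g) → ZMod 2 // q0 g (c ∘ swapIdx g) = v} =
      Nat.card {a : Fin (2 * g) → ZMod 2 // q0 g a = v} := by
    apply Nat.card_congr
    exact Equiv.subtypeEquiv
      (⟨fun c => c ∘ swapIdx g, fun c => c ∘ swapIdx g,
        fun c => by funext k; simp [Function.comp, swapIdx_invol],
        fun c => by funext k; simp [Function.comp, swapIdx_invol]⟩ :
        (Fin (2 * g) → ZMod 2) ≃ (Fin (2 * g) → ZMod 2))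
      (fun c => Iff.rfl)
  rw [step2, card_q0]

end ThetaAux

theorem count_even_odd_theta_characteristics (g : ℕ) (hg : 1 ≤ g) :
    Nat.card {q : (Fin (2 * g) → ZMod 2) → ZMod 2 //
        IsQuadRefinement g q ∧ arf g q = 0} = 2 ^ (g - 1) * (2 ^ g + 1) ∧
    Nat.card {q : (Fin (2 * g) → ZMod 2) → ZMod 2 //
        IsQuadRefinement g q ∧ arf g q = 1} = 2 ^ (g - 1) * (2 ^ g - 1) := by
  have hAB : (2 : ℕ) ^ (g - 1) * 2 ^ g = 2 ^ (2 * g - 1) := by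
    rw [← pow_add]
    congr 1
    omega
  have hpos : 1 ≤ (2 : ℕ) ^ (g - 1) := Nat.one_le_two_pow
  have hle : (2 : ℕ) ^ (g - 1) ≤ 2 ^ (2 * g - 1) := Nat.pow_le_pow_right (by norm_num) (by omega)
  constructor
  · rw [ThetaAux.count_arf g hg 0, ThetaAux.card_zero_pairs g hg]
    rw [Nat.mul_add, mul_one, hAB]
  · rw [ThetaAux.count_arf g hg 1, ThetaAux.card_one_pairs g hg]
    rw [Nat.mul_sub, mul_one, hAB]
end

section
/- Let V = 𝔽₂^{2g} with nondegenerate alternating form B, and fix a nonzero vector v ∈ V. The number of quadratic refinements q of B with Arf invariant 1 such that the quadratic refinement q' defined by q'(x) = q(x) + B(v,x) also has Arf invariant 1 equals 2^{g-1}(2^{g-1} - 1). -/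
namespace Arf

def chi (c : ZMod 2) : ℤ := if c = 0 then 1 else -1

lemma chi_add (a b : ZMod 2) : chi (a + b) = chi a * chi b := by revert a b; decide

lemma chi_one : chi 1 = -1 := rfl

lemma zmod2_cases : ∀ a : ZMod 2, a = 0 ∨ a = 1 := by decide

lemma zmod2_add_self : ∀ a : ZMod 2, a + a = 0 := by decide

def q0 (g : ℕ) (x : Fin (2 * g) → ZMod 2) : ZMod 2 :=
  ∑ i : Fin g, x ⟨2 * i.val, by have := i.isLt; omega⟩ * x ⟨2 * i.val + 1, by have := i.isLt; omega⟩

lemma q0_ref (g : ℕ) : IsQuadRefinement g (q0 g) := by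
  intro x y
  unfold q0 stdSymplecticForm
  rw [← Finset.sum_add_distrib, ← Finset.sum_add_distrib]
  refine Finset.sum_congr rfl fun i _ => ?_
  simp only [Pi.add_apply]
  ring

lemma B_add_left (g : ℕ) (x y z : Fin (2 * g) → ZMod 2) :
    stdSymplecticForm g (x + y) z = stdSymplecticForm g x z + stdSymplecticForm g y z := by
  unfold stdSymplecticForm
  rw [← Finset.sum_add_distrib]
  refine Finset.sum_congr rfl fun i _ => ?_
  simp only [Pi.add_apply]
  ring

lemma B_comm (g : ℕ) (x y : Fin (2 * g) → ZMod 2) :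
    stdSymplecticForm g x y = stdSymplecticForm g y x := by
  unfold stdSymplecticForm
  exact Finset.sum_congr rfl fun i _ => by ring

lemma chi_sum {ι : Type _} (s : Finset ι) (f : ι → ZMod 2) :
    chi (∑ i ∈ s, f i) = ∏ i ∈ s, chi (f i) := by
  induction s using Finset.cons_induction with
  | empty => simp [chi]
  | cons a s ha ih => rw [Finset.sum_cons, Finset.prod_cons, chi_add, ih]

end Arf
namespace Arf

def partner (g : ℕ) (j : Fin (2 * g)) : Fin (2 * g) :=
  ⟨if j.val % 2 = 0 then j.val + 1 else j.val - 1, by have := j.isLt; split <;> omega⟩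

lemma partner_partner (g : ℕ) (j : Fin (2 * g)) : partner g (partner g j) = j := by
  have := j.isLt
  simp only [partner, Fin.ext_iff, Fin.val_mk]
  split <;> split <;> omega

lemma partner_ne (g : ℕ) (j : Fin (2 * g)) : partner g j ≠ j := by
  have := j.isLt
  simp only [partner, Ne, Fin.ext_iff]
  split <;> omega

lemma B_single (g : ℕ) (w : Fin (2 * g) → ZMod 2) (j : Fin (2 * g)) :
    stdSymplecticForm g w (Pi.single j 1) = w (partner g j) := by
  have hj := j.isLt
  unfold stdSymplecticForm
  rw [Finset.sum_eq_single (⟨j.val / 2, by omega⟩ : Fin g)]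
  · by_cases h : j.val % 2 = 0
    · have h2 : (⟨2 * (⟨j.val / 2, by omega⟩ : Fin g).val, by omega⟩ : Fin (2 * g)) = j := by
        simp only [Fin.ext_iff, Fin.val_mk]; omega
      have h1 : (⟨2 * (⟨j.val / 2, by omega⟩ : Fin g).val + 1, by omega⟩ : Fin (2 * g))
          = partner g j := by
        simp only [partner, Fin.ext_iff, Fin.val_mk, h, if_true]; omega
      rw [h2, h1, Pi.single_eq_same, Pi.single_eq_of_ne (partner_ne g j)]
      ring
    · have h2 : (⟨2 * (⟨j.val / 2, by omega⟩ : Fin g).val + 1, by omega⟩ : Fin (2 * g)) = j := by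
        simp only [Fin.ext_iff, Fin.val_mk]; omega
      have h1 : (⟨2 * (⟨j.val / 2, by omega⟩ : Fin g).val, by omega⟩ : Fin (2 * g))
          = partner g j := by
        simp only [partner, Fin.ext_iff, Fin.val_mk, h, if_false]; omega
      rw [h2, h1, Pi.single_eq_same, Pi.single_eq_of_ne (partner_ne g j)]
      ring
  · intro b _ hb
    have hbv : b.val ≠ j.val / 2 := fun hh => hb (Fin.ext hh)
    have hb2 := b.isLt
    have e1 : Pi.single (M := fun _ : Fin (2 * g) => ZMod 2) j 1 ⟨2 * b.val + 1, by omega⟩ = 0 :=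
      Pi.single_eq_of_ne (by simp only [Ne, Fin.ext_iff, Fin.val_mk]; omega) 1
    have e2 : Pi.single (M := fun _ : Fin (2 * g) => ZMod 2) j 1 ⟨2 * b.val, by omega⟩ = 0 :=
      Pi.single_eq_of_ne (by simp only [Ne, Fin.ext_iff, Fin.val_mk]; omega) 1
    rw [e1, e2, mul_zero, mul_zero, add_zero]
  · simp

lemma q0_single (g : ℕ) (j : Fin (2 * g)) : q0 g (Pi.single j 1) = 0 := by
  unfold q0
  refine Finset.sum_eq_zero fun i _ => ?_
  have hi := i.isLt
  have hj := j.isLt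
  by_cases h : (⟨2 * i.val, by omega⟩ : Fin (2 * g)) = j
  · have hval : 2 * i.val = j.val := by rw [← h]
    have hne : (⟨2 * i.val + 1, by omega⟩ : Fin (2 * g)) ≠ j := by
      simp only [Ne, Fin.ext_iff, Fin.val_mk]; omega
    rw [Pi.single_eq_of_ne hne, mul_zero]
  · rw [Pi.single_eq_of_ne h, zero_mul]

end Arf
namespace Arf

def E (g : ℕ) : (Fin g → ZMod 2 × ZMod 2) ≃ (Fin (2 * g) → ZMod 2) where
  toFun y j := if j.val % 2 = 0 then (y ⟨j.val / 2, by have := j.isLt; omega⟩).1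
               else (y ⟨j.val / 2, by have := j.isLt; omega⟩).2
  invFun x i := (x ⟨2 * i.val, by have := i.isLt; omega⟩,
                 x ⟨2 * i.val + 1, by have := i.isLt; omega⟩)
  left_inv y := by
    funext i
    have h1 : (2 * i.val) % 2 = 0 := by omega
    have h2 : ¬ (2 * i.val + 1) % 2 = 0 := by omega
    have h3 : (2 * i.val) / 2 = i.val := by omega
    have h4 : (2 * i.val + 1) / 2 = i.val := by omega
    refine Prod.ext ?_ ?_ <;>
      simp only [Fin.val_mk, h1, h2, h3, h4, if_true, if_false] <;>
      congr 1 <;> exact Fin.ext (by simp [Fin.val_mk])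
  right_inv x := by
    funext j
    have hj := j.isLt
    by_cases h : j.val % 2 = 0 <;>
      simp only [Fin.val_mk, h, if_true, if_false] <;>
      congr 1 <;> exact Fin.ext (by simp only [Fin.val_mk]; omega)

lemma q0_E (g : ℕ) (y : Fin g → ZMod 2 × ZMod 2) :
    q0 g (E g y) = ∑ i : Fin g, (y i).1 * (y i).2 := by
  unfold q0
  refine Finset.sum_congr rfl fun i _ => ?_
  have hi := i.isLt
  have h1 : (2 * i.val) % 2 = 0 := by omega
  have h2 : ¬ (2 * i.val + 1) % 2 = 0 := by omega
  have h3 : (2 * i.val) / 2 = i.val := by omega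
  have h4 : (2 * i.val + 1) / 2 = i.val := by omega
  simp only [E, Equiv.coe_fn_mk, Fin.val_mk, h1, h2, h3, h4, if_true, if_false]

lemma sum_chi_q0 (g : ℕ) : ∑ x : Fin (2 * g) → ZMod 2, chi (q0 g x) = 2 ^ g := by
  rw [← Equiv.sum_comp (E g) (fun x => chi (q0 g x))]
  have : ∀ y : Fin g → ZMod 2 × ZMod 2, chi (q0 g (E g y)) = ∏ i : Fin g, chi ((y i).1 * (y i).2) := by
    intro y; rw [q0_E, chi_sum]
  rw [Finset.sum_congr rfl fun y _ => this y,
    ← Fintype.prod_sum (fun (_ : Fin g) (p : ZMod 2 × ZMod 2) => chi (p.1 * p.2))]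
  have h2 : ∑ p : ZMod 2 × ZMod 2, chi (p.1 * p.2) = 2 := by decide
  rw [Finset.prod_congr rfl fun i _ => h2, Finset.prod_const, Finset.card_univ, Fintype.card_fin]

end Arf
namespace Arf

lemma card_zero_eq (g : ℕ) (F : (Fin (2 * g) → ZMod 2) → ZMod 2) :
    (Nat.card {x : Fin (2 * g) → ZMod 2 // F x = 0} : ℤ) * 2 =
      2 ^ (2 * g) + ∑ x : Fin (2 * g) → ZMod 2, chi (F x) := by
  classical
  have hcard : Nat.card {x : Fin (2 * g) → ZMod 2 // F x = 0} =
      (Finset.univ.filter (fun x => F x = 0)).card := by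
    rw [Nat.card_eq_fintype_card, Fintype.card_subtype]
  have hsum : ∑ x : Fin (2 * g) → ZMod 2, chi (F x) =
      ((Finset.univ.filter (fun x => F x = 0)).card : ℤ) -
        ((Finset.univ.filter (fun x => ¬ F x = 0)).card : ℤ) := by
    unfold chi
    rw [Finset.sum_ite, Finset.sum_const, Finset.sum_const]
    simp [sub_eq_add_neg]
  have htot : (Finset.univ.filter (fun x => F x = 0)).card +
      (Finset.univ.filter (fun x => ¬ F x = 0)).card = 2 ^ (2 * g) := by
    rw [Finset.card_filter_add_card_filter_not, Finset.card_univ]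
    simp [Fintype.card_fun]
  rw [hcard, hsum]
  have := congrArg (fun n : ℕ => (n : ℤ)) htot
  push_cast at this ⊢
  linarith

lemma Phi_eq_shift (g : ℕ) (w x : Fin (2 * g) → ZMod 2) :
    q0 g x + stdSymplecticForm g w x = q0 g (x + w) + q0 g w := by
  have h := q0_ref g x w
  have h2 : q0 g w + q0 g w = 0 := zmod2_add_self _
  have hsym : stdSymplecticForm g x w = stdSymplecticForm g w x := B_comm g x w
  rw [h, hsym]
  linear_combination -h2

lemma sum_chi_Phi (g : ℕ) (w : Fin (2 * g) → ZMod 2) :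
    ∑ x : Fin (2 * g) → ZMod 2, chi (q0 g x + stdSymplecticForm g w x) =
      chi (q0 g w) * 2 ^ g := by
  have h1 : ∀ x, chi (q0 g x + stdSymplecticForm g w x) = chi (q0 g w) * chi (q0 g (x + w)) := by
    intro x
    rw [Phi_eq_shift g w x, chi_add, mul_comm]
  rw [Finset.sum_congr rfl fun x _ => h1 x, ← Finset.mul_sum]
  congr 1
  rw [← sum_chi_q0 g, ← Equiv.sum_comp (Equiv.addRight w) (fun x => chi (q0 g x))]
  rfl

lemma arf_Phi (g : ℕ) (hg : 1 ≤ g) (w : Fin (2 * g) → ZMod 2) :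
    arf g (fun x => q0 g x + stdSymplecticForm g w x) = q0 g w := by
  set a : ℕ := 2 ^ (g - 1) with ha
  have ha1 : 1 ≤ a := Nat.one_le_two_pow
  have e1 : g - 1 + 1 = g := by omega
  have h2g : (2 : ℕ) ^ g = 2 * a := by rw [ha, ← pow_succ', e1]
  have e2 : 2 * g - 1 = g + (g - 1) := by omega
  have e4 : (2 : ℕ) ^ (2 * g - 1) = 2 * a * a := by rw [e2, pow_add, h2g]
  have e3 : (2 : ℕ) ^ (2 * g) = 2 * a * (2 * a) := by rw [two_mul, pow_add, h2g]
  set Z := Nat.card {x : Fin (2 * g) → ZMod 2 //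
      (fun x => q0 g x + stdSymplecticForm g w x) x = 0} with hZ
  have key : (Z : ℤ) * 2 = 2 ^ (2 * g) + chi (q0 g w) * 2 ^ g := by
    rw [hZ, card_zero_eq g (fun x => q0 g x + stdSymplecticForm g w x), sum_chi_Phi g w]
  have e3' : (2 : ℤ) ^ (2 * g) = 2 * a * (2 * a) := by exact_mod_cast e3
  have h2g' : (2 : ℤ) ^ g = 2 * a := by exact_mod_cast h2g
  rcases zmod2_cases (q0 g w) with h0 | h1
  · have hchi : chi (q0 g w) = 1 := by rw [h0]; rfl
    have : (Z : ℤ) * 2 = ((2 * a * (2 * a) : ℕ) : ℤ) + ((2 * a : ℕ) : ℤ) := by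
      rw [key, hchi, e3', h2g']
      push_cast
      ring
    have hZval : Z = 2 * a * a + a := by
      have : (Z : ℤ) = ((2 * a * a + a : ℕ) : ℤ) := by push_cast at this ⊢; linarith
      exact_mod_cast this
    rw [h0]
    unfold arf
    rw [if_pos]
    rw [← hZ, hZval, e4, ha]
  · have hchi : chi (q0 g w) = -1 := by rw [h1]; rfl
    have hkey : (Z : ℤ) * 2 = ((2 * a * (2 * a) : ℕ) : ℤ) - ((2 * a : ℕ) : ℤ) := by
      rw [key, hchi, e3', h2g']
      push_cast
      ring
    rw [h1]
    unfold arf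
    rw [if_neg]
    rw [← hZ]
    intro hcon
    rw [e4, ← ha] at hcon
    have : ((2 * a * a + a : ℕ) : ℤ) * 2 = ((2 * a * (2 * a) : ℕ) : ℤ) - ((2 * a : ℕ) : ℤ) := by
      rw [← hcon]; exact hkey
    push_cast at this
    have : (a : ℤ) = 0 := by linarith
    omega

end Arf
namespace Arf

lemma B_add_right (g : ℕ) (w x y : Fin (2 * g) → ZMod 2) :
    stdSymplecticForm g w (x + y) = stdSymplecticForm g w x + stdSymplecticForm g w y := by
  rw [B_comm g w (x + y), B_add_left, B_comm g x w, B_comm g y w]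

lemma zmod2_eq_of_add_eq_zero : ∀ a b : ZMod 2, a + b = 0 → a = b := by decide

lemma Phi_ref (g : ℕ) (w : Fin (2 * g) → ZMod 2) :
    IsQuadRefinement g (fun x => q0 g x + stdSymplecticForm g w x) := by
  intro x y
  simp only
  rw [q0_ref g x y, B_add_right g w x y]
  ring

lemma exists_w (g : ℕ) (q : (Fin (2 * g) → ZMod 2) → ZMod 2) (hq : IsQuadRefinement g q) :
    ∃ w, q = fun x => q0 g x + stdSymplecticForm g w x := by
  classical
  set w : Fin (2 * g) → ZMod 2 := fun j => q (Pi.single (partner g j) 1) with hw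
  refine ⟨w, ?_⟩
  set D : (Fin (2 * g) → ZMod 2) → ZMod 2 :=
    fun x => q x + q0 g x + stdSymplecticForm g w x with hD
  have hDadd : ∀ x y, D (x + y) = D x + D y := by
    intro x y
    simp only [hD]
    rw [hq x y, q0_ref g x y, B_add_right g w x y]
    linear_combination zmod2_add_self (stdSymplecticForm g x y)
  let φ : (Fin (2 * g) → ZMod 2) →+ ZMod 2 := AddMonoidHom.mk' D fun x y => hDadd x y
  have hsingle : ∀ (j : Fin (2 * g)) (a : ZMod 2), D (Pi.single j a) = 0 := by
    intro j a
    rcases zmod2_cases a with h | h <;> subst h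
    · rw [Pi.single_zero]
      have h0 := hDadd 0 0
      rw [add_zero] at h0
      have := zmod2_add_self (D 0)
      -- h0 : D 0 = D 0 + D 0, this : D 0 + D 0 = 0
      rw [this] at h0
      exact h0
    · simp only [hD]
      rw [q0_single g j, B_single g w j, add_zero]
      have : w (partner g j) = q (Pi.single j 1) := by
        rw [hw]
        simp only
        rw [partner_partner]
      rw [this]
      exact zmod2_add_self _
  have hDzero : ∀ x, D x = 0 := by
    intro x
    have hx : x = ∑ j, Pi.single j (x j) := (Finset.univ_sum_single x).symm
    have : D x = φ x := rfl
    rw [this, hx, map_sum]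
    exact Finset.sum_eq_zero fun j _ => hsingle j (x j)
  funext x
  have hdx := hDzero x
  simp only [hD] at hdx
  rw [add_assoc] at hdx
  exact zmod2_eq_of_add_eq_zero _ _ hdx

lemma Phi_inj (g : ℕ) (w w' : Fin (2 * g) → ZMod 2)
    (h : (fun x => q0 g x + stdSymplecticForm g w x)
       = (fun x => q0 g x + stdSymplecticForm g w' x)) : w = w' := by
  funext j
  have hj := congrFun h (Pi.single (partner g j) 1)
  simp only [B_single, partner_partner] at hj
  exact add_left_cancel hj

lemma exists_pair (g : ℕ) (v : Fin (2 * g) → ZMod 2) (hv : v ≠ 0) :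
    ∃ u, stdSymplecticForm g u v = 1 := by
  have hj : ∃ j, v j ≠ 0 := by
    by_contra hc
    push_neg at hc
    exact hv (funext fun j => hc j)
  obtain ⟨j, hj⟩ := hj
  have hvj : v j = 1 := by
    rcases zmod2_cases (v j) with h | h
    · exact absurd h hj
    · exact h
  refine ⟨Pi.single (partner g j) 1, ?_⟩
  rw [B_comm, B_single, partner_partner, hvj]

lemma sum_chi_B (g : ℕ) (v : Fin (2 * g) → ZMod 2) (hv : v ≠ 0) :
    ∑ w : Fin (2 * g) → ZMod 2, chi (stdSymplecticForm g w v) = 0 := by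
  obtain ⟨u, hu⟩ := exists_pair g v hv
  have h : ∑ w : Fin (2 * g) → ZMod 2, chi (stdSymplecticForm g w v)
      = ∑ w : Fin (2 * g) → ZMod 2, chi (stdSymplecticForm g (w + u) v) :=
    (Equiv.sum_comp (Equiv.addRight u) (fun w => chi (stdSymplecticForm g w v))).symm
  have h2 : ∀ w, chi (stdSymplecticForm g (w + u) v) = - chi (stdSymplecticForm g w v) := by
    intro w
    rw [B_add_left, hu, chi_add, chi_one]
    ring
  rw [Finset.sum_congr rfl fun w _ => h2 w, Finset.sum_neg_distrib] at h
  linarith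

end Arf
namespace Arf

lemma count_w (g : ℕ) (hg : 1 ≤ g) (v : Fin (2 * g) → ZMod 2) (hv : v ≠ 0) :
    Nat.card {w : Fin (2 * g) → ZMod 2 // q0 g w = 1 ∧ q0 g (w + v) = 1} =
      2 ^ (g - 1) * (2 ^ (g - 1) - 1) := by
  classical
  set a : ℕ := 2 ^ (g - 1) with ha
  have ha1 : 1 ≤ a := Nat.one_le_two_pow
  have e1 : g - 1 + 1 = g := by omega
  have h2g : (2 : ℕ) ^ g = 2 * a := by rw [ha, ← pow_succ', e1]
  have e3 : (2 : ℕ) ^ (2 * g) = 2 * a * (2 * a) := by rw [two_mul, pow_add, h2g]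
  set N := Nat.card {w : Fin (2 * g) → ZMod 2 // q0 g w = 1 ∧ q0 g (w + v) = 1} with hN
  set f : (Fin (2 * g) → ZMod 2) → ℤ :=
    fun w => (1 - chi (q0 g w)) * (1 - chi (q0 g (w + v))) with hf
  have hNcard : N = (Finset.univ.filter
      (fun w : Fin (2 * g) → ZMod 2 => q0 g w = 1 ∧ q0 g (w + v) = 1)).card := by
    rw [hN, Nat.card_eq_fintype_card, Fintype.card_subtype]
  have expand1 : ∑ w : Fin (2 * g) → ZMod 2, f w = 4 * (N : ℤ) := by
    have hfw : ∀ w, f w = if (q0 g w = 1 ∧ q0 g (w + v) = 1) then (4 : ℤ) else 0 := by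
      intro w
      rcases zmod2_cases (q0 g w) with h1 | h1 <;>
        rcases zmod2_cases (q0 g (w + v)) with h2 | h2 <;>
          simp [hf, h1, h2, chi] <;> norm_num
    rw [Finset.sum_congr rfl fun w _ => hfw w, Finset.sum_ite, Finset.sum_const,
      Finset.sum_const, hNcard]
    simp [mul_comm]
  have hq0wv : ∀ w, q0 g w + q0 g (w + v) = q0 g v + stdSymplecticForm g w v := by
    intro w
    rw [q0_ref g w v]
    linear_combination zmod2_add_self (q0 g w)
  have hprod : ∀ w, chi (q0 g w) * chi (q0 g (w + v))
      = chi (q0 g v) * chi (stdSymplecticForm g w v) := by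
    intro w
    rw [← chi_add, ← chi_add, hq0wv w]
  have hfe : ∀ w, f w = 1 - chi (q0 g w) - chi (q0 g (w + v))
      + chi (q0 g v) * chi (stdSymplecticForm g w v) := by
    intro w
    rw [hf]
    simp only
    rw [← hprod w]
    ring
  have hshift : ∑ w : Fin (2 * g) → ZMod 2, chi (q0 g (w + v)) = 2 ^ g := by
    rw [← sum_chi_q0 g, ← Equiv.sum_comp (Equiv.addRight v) (fun x => chi (q0 g x))]
    rfl
  have expand2 : ∑ w : Fin (2 * g) → ZMod 2, f w = 4 * ((a : ℤ) * a - a) := by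
    rw [Finset.sum_congr rfl fun w _ => hfe w, Finset.sum_add_distrib,
      Finset.sum_sub_distrib, Finset.sum_sub_distrib, ← Finset.mul_sum,
      sum_chi_q0 g, hshift, sum_chi_B g v hv, mul_zero, add_zero,
      Finset.sum_const, Finset.card_univ]
    have hcf : Fintype.card (Fin (2 * g) → ZMod 2) = 2 ^ (2 * g) := by
      simp [Fintype.card_fun]
    rw [hcf]
    have e3' : ((2 : ℕ) ^ (2 * g) : ℤ) = 2 * (a : ℤ) * (2 * a) := by exact_mod_cast e3
    have h2g' : ((2 : ℕ) ^ g : ℤ) = 2 * (a : ℤ) := by exact_mod_cast h2g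
    rw [nsmul_eq_mul, mul_one]
    push_cast at e3' h2g' ⊢
    rw [e3', h2g']
    ring
  have hNint : (N : ℤ) = (a : ℤ) * a - a := by
    rw [expand1] at expand2
    linarith
  have : (N : ℤ) = ((a * (a - 1) : ℕ) : ℤ) := by
    rw [hNint]
    push_cast [Nat.cast_sub ha1]
    ring
  exact_mod_cast this

end Arf
theorem count_odd_theta_characteristics_staying_odd (g : ℕ) (hg : 1 ≤ g)
    (v : Fin (2 * g) → ZMod 2) (hv : v ≠ 0) :
    Nat.card {q : (Fin (2 * g) → ZMod 2) → ZMod 2 //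
        IsQuadRefinement g q ∧ arf g q = 1 ∧
          arf g (fun x => q x + stdSymplecticForm g v x) = 1} =
      2 ^ (g - 1) * (2 ^ (g - 1) - 1) := by
  classical
  rw [← Arf.count_w g hg v hv]
  apply Nat.card_congr
  have hfun : ∀ w : Fin (2 * g) → ZMod 2,
      (fun x => (Arf.q0 g x + stdSymplecticForm g w x) + stdSymplecticForm g v x)
        = (fun x => Arf.q0 g x + stdSymplecticForm g (w + v) x) := by
    intro w
    funext x
    rw [Arf.B_add_left]
    ring
  refine (Equiv.ofBijective
    (fun w : {w : Fin (2 * g) → ZMod 2 // Arf.q0 g w = 1 ∧ Arf.q0 g (w + v) = 1} =>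
      (⟨fun x => Arf.q0 g x + stdSymplecticForm g w.val x,
        Arf.Phi_ref g w.val,
        by rw [Arf.arf_Phi g hg w.val]; exact w.prop.1,
        by
          show arf g (fun x => (Arf.q0 g x + stdSymplecticForm g w.val x)
            + stdSymplecticForm g v x) = 1
          rw [hfun w.val, Arf.arf_Phi g hg]
          exact w.prop.2⟩ :
        {q : (Fin (2 * g) → ZMod 2) → ZMod 2 //
          IsQuadRefinement g q ∧ arf g q = 1 ∧
            arf g (fun x => q x + stdSymplecticForm g v x) = 1}))
    ⟨?_, ?_⟩).symm
  · intro w w' h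
    have := Subtype.ext_iff.mp h
    simp only at this
    exact Subtype.ext (Arf.Phi_inj g w.val w'.val this)
  · rintro ⟨q, hq, h1, h2⟩
    obtain ⟨w, rfl⟩ := Arf.exists_w g q hq
    rw [Arf.arf_Phi g hg] at h1
    have h2' : Arf.q0 g (w + v) = 1 := by
      rw [show (fun x => (fun x => Arf.q0 g x + stdSymplecticForm g w x) x
          + stdSymplecticForm g v x)
        = (fun x => Arf.q0 g x + stdSymplecticForm g (w + v) x) from hfun w,
        Arf.arf_Phi g hg] at h2
      exact h2
    exact ⟨⟨w, h1, h2'⟩, rfl⟩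
end
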